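/- If C is a strongly connected component in PA*01 and C has an alive exit state, then C has a maximal alive exit state, i.e. an alive exit state s ∈ C such that for every alive exit state s' ∈ C and every normed exit transition e' ∈ Extⁿ(s') there exists e ∈ Extⁿ(s) with e ∼ e'. -/

import Mathlib

/-- PA*01 expressions over an action set `Act`. -/
inductive PExpr (Act : Type) : Type
  | dl : PExpr Act
  | emp : PExpr Act
  | act : Act → PExpr Act
  | seq : PExpr Act → PExpr Act → PExpr Act
  | alt : PExpr Act → PExpr Act → PExpr Act
  | star : PExpr Act → PExpr Act
  | par : PExpr Act → PExpr Act → PExpr Act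

variable {Act : Type}

/-- The termination predicate `↓` of PA*01. -/
inductive PTerm : PExpr Act → Prop
  | emp : PTerm PExpr.emp
  | altl {p q : PExpr Act} : PTerm p → PTerm (PExpr.alt p q)
  | altr {p q : PExpr Act} : PTerm q → PTerm (PExpr.alt p q)
  | seq {p q : PExpr Act} : PTerm p → PTerm q → PTerm (PExpr.seq p q)
  | star {p : PExpr Act} : PTerm (PExpr.star p)
  | par {p q : PExpr Act} : PTerm p → PTerm q → PTerm (PExpr.par p q)

/-- The transition relation `p →a p'` of PA*01 (pure interleaving). -/
inductive PStep : PExpr Act → Act → PExpr Act → Prop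
  | act {a : Act} : PStep (PExpr.act a) a PExpr.emp
  | altl {p q p' : PExpr Act} {a : Act} : PStep p a p' → PStep (PExpr.alt p q) a p'
  | altr {p q q' : PExpr Act} {a : Act} : PStep q a q' → PStep (PExpr.alt p q) a q'
  | seql {p q p' : PExpr Act} {a : Act} :
      PStep p a p' → PStep (PExpr.seq p q) a (PExpr.seq p' q)
  | seqr {p q q' : PExpr Act} {a : Act} :
      PTerm p → PStep q a q' → PStep (PExpr.seq p q) a q'
  | star {p p' : PExpr Act} {a : Act} :
      PStep p a p' → PStep (PExpr.star p) a (PExpr.seq p' (PExpr.star p))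
  | parl {p q p' : PExpr Act} {a : Act} :
      PStep p a p' → PStep (PExpr.par p q) a (PExpr.par p' q)
  | parr {p q q' : PExpr Act} {a : Act} :
      PStep q a q' → PStep (PExpr.par p q) a (PExpr.par p q')

/-- `p → p'`: a transition with some label. -/
def PStepAny (p q : PExpr Act) : Prop := ∃ a, PStep p a q

/-- `p →* p'`: reachability. -/
def PReach (p q : PExpr Act) : Prop := Relation.ReflTransGen PStepAny p q

/-- `p` is normed: some terminating expression is reachable from `p`. -/
def PNormed (p : PExpr Act) : Prop := ∃ q, PReach p q ∧ PTerm q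

/-- A strongly connected component: a maximal set of mutually reachable states. -/
def IsSCC (C : Set (PExpr Act)) : Prop :=
  (∀ s ∈ C, ∀ t ∈ C, PReach s t) ∧
    ∀ D : Set (PExpr Act), C ⊆ D → (∀ s ∈ D, ∀ t ∈ D, PReach s t) → D = C

/-- A trivial SCC: a singleton `{s}` with no transition `s → s`. -/
def IsTrivialSCC (C : Set (PExpr Act)) : Prop := ∃ s, C = {s} ∧ ¬ PStepAny s s

/-- `C · q = { p · q | p ∈ C }`. -/
def seqSet (C : Set (PExpr Act)) (q : PExpr Act) : Set (PExpr Act) :=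
  (fun p => PExpr.seq p q) '' C

/-- `C₁ ‖ C₂ = { p ‖ q | p ∈ C₁, q ∈ C₂ }`. -/
def parSet (C₁ C₂ : Set (PExpr Act)) : Set (PExpr Act) :=
  Set.image2 PExpr.par C₁ C₂

/-- A basic SCC: `C = C' · q*` for some set `C'` that is not an SCC. -/
def IsBasic (C : Set (PExpr Act)) : Prop :=
  ∃ (C' : Set (PExpr Act)) (q : PExpr Act), C = seqSet C' (PExpr.star q) ∧ ¬ IsSCC C'

/-- The set `Extⁿ(s)` of normed exit transitions from `s`, w.r.t. the SCC `C`. -/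
def ExtN (C : Set (PExpr Act)) (s : PExpr Act) : Set (Act × PExpr Act) :=
  {e | PStep s e.1 e.2 ∧ e.2 ∉ C ∧ PNormed e.2}

/-- `s ∈ C` is an alive exit state if `s↓` or `s` has a normed exit transition. -/
def AliveExit (C : Set (PExpr Act)) (s : PExpr Act) : Prop :=
  s ∈ C ∧ (PTerm s ∨ ∃ e, e ∈ ExtN C s)

/-- `E · q = { (a, r · q) | (a, r) ∈ E }`. -/
def extSeq (E : Set (Act × PExpr Act)) (q : PExpr Act) : Set (Act × PExpr Act) :=
  (fun e => (e.1, PExpr.seq e.2 q)) '' E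

/-- `E ‖ q = { (a, r ‖ q) | (a, r) ∈ E }`. -/
def extParL (E : Set (Act × PExpr Act)) (q : PExpr Act) : Set (Act × PExpr Act) :=
  (fun e => (e.1, PExpr.par e.2 q)) '' E

/-- `p ‖ E = { (a, p ‖ r) | (a, r) ∈ E }`. -/
def extParR (p : PExpr Act) (E : Set (Act × PExpr Act)) : Set (Act × PExpr Act) :=
  (fun e => (e.1, PExpr.par p e.2)) '' E

/-- `s` and `s'` belong to the same strongly connected component. -/
def SameSCC (s s' : PExpr Act) : Prop := ∃ C : Set (PExpr Act), IsSCC C ∧ s ∈ C ∧ s' ∈ C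

/-- The equivalence `∼` on exit transitions: same action, targets in the same SCC. -/
def ExitEquiv (e e' : Act × PExpr Act) : Prop := e.1 = e'.1 ∧ SameSCC e.2 e'.2

/-- Is the expression a star expression? -/
def isStarP : PExpr Act → Bool
  | PExpr.star _ => true
  | _ => false

/-- The measure `OC` on PA*01 expressions. -/
def OC : PExpr Act → ℕ
  | PExpr.dl => 0
  | PExpr.emp => 0
  | PExpr.act _ => 1
  | PExpr.seq _ q => if isStarP q then 0 else OC q + 1
  | PExpr.alt p q => max (OC p) (OC q) + 1
  | PExpr.star _ => 1
  | PExpr.par _ _ => 0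

/-- A PA*01 expression without occurrences of `‖` is a BPA*01 expression. -/
def NoPar : PExpr Act → Prop
  | PExpr.dl => True
  | PExpr.emp => True
  | PExpr.act _ => True
  | PExpr.seq p q => NoPar p ∧ NoPar q
  | PExpr.alt p q => NoPar p ∧ NoPar q
  | PExpr.star p => NoPar p
  | PExpr.par _ _ => False

/-- Bisimulations on PA*01 expressions. -/
def IsBisimulation (R : PExpr Act → PExpr Act → Prop) : Prop :=
  ∀ p q, R p q →
    (∀ a p', PStep p a p' → ∃ q', PStep q a q' ∧ R p' q') ∧
    (∀ a q', PStep q a q' → ∃ p', PStep p a p' ∧ R p' q') ∧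
    (PTerm p ↔ PTerm q)

/-- Bisimilarity of PA*01 expressions. -/
def Bisimilar (p q : PExpr Act) : Prop :=
  ∃ R : PExpr Act → PExpr Act → Prop, IsBisimulation R ∧ R p q


/-! ### Auxiliary lemmas -/

section Aux
variable {Act : Type}

lemma preach_refl (p : PExpr Act) : PReach p p := Relation.ReflTransGen.refl

lemma preach_trans {p q r : PExpr Act} (h : PReach p q) (h' : PReach q r) : PReach p r :=
  Relation.ReflTransGen.trans h h'

lemma preach_single {p q : PExpr Act} {a : Act} (h : PStep p a q) : PReach p q :=
  Relation.ReflTransGen.single ⟨a, h⟩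

lemma not_step_emp {a : Act} {x : PExpr Act} (h : PStep PExpr.emp a x) : False := by cases h

lemma step_star_inv {t : PExpr Act} {a : Act} {x : PExpr Act}
    (h : PStep (PExpr.star t) a x) :
    ∃ t', x = PExpr.seq t' (PExpr.star t) ∧ PStep t a t' := by
  cases h with
  | star h => exact ⟨_, rfl, h⟩

lemma step_seq_inv {p q : PExpr Act} {a : Act} {x : PExpr Act}
    (h : PStep (PExpr.seq p q) a x) :
    (∃ p', x = PExpr.seq p' q ∧ PStep p a p') ∨ (PTerm p ∧ PStep q a x) := by
  cases h with
  | seql h => exact Or.inl ⟨_, rfl, h⟩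
  | seqr h1 h2 => exact Or.inr ⟨h1, h2⟩

lemma step_par_inv {p q : PExpr Act} {a : Act} {x : PExpr Act}
    (h : PStep (PExpr.par p q) a x) :
    (∃ p', x = PExpr.par p' q ∧ PStep p a p') ∨ (∃ q', x = PExpr.par p q' ∧ PStep q a q') := by
  cases h with
  | parl h => exact Or.inl ⟨_, rfl, h⟩
  | parr h => exact Or.inr ⟨_, rfl, h⟩

lemma term_seq_inv {p q : PExpr Act} (h : PTerm (PExpr.seq p q)) : PTerm p ∧ PTerm q := by
  cases h with
  | seq h1 h2 => exact ⟨h1, h2⟩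

lemma term_par_inv {p q : PExpr Act} (h : PTerm (PExpr.par p q)) : PTerm p ∧ PTerm q := by
  cases h with
  | par h1 h2 => exact ⟨h1, h2⟩

lemma step_shape {p : PExpr Act} {a : Act} {x : PExpr Act} (h : PStep p a x) :
    x = PExpr.emp ∨ (∃ u v, x = PExpr.seq u v) ∨ (∃ u v, x = PExpr.par u v) := by
  induction h with
  | act => exact Or.inl rfl
  | altl _ ih => exact ih
  | altr _ ih => exact ih
  | seql _ _ => exact Or.inr (Or.inl ⟨_, _, rfl⟩)
  | seqr _ _ ih => exact ih
  | star _ => exact Or.inr (Or.inl ⟨_, _, rfl⟩)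
  | parl _ _ => exact Or.inr (Or.inr ⟨_, _, rfl⟩)
  | parr _ _ => exact Or.inr (Or.inr ⟨_, _, rfl⟩)

lemma reach_seql {p p' q : PExpr Act} (h : PReach p p') :
    PReach (PExpr.seq p q) (PExpr.seq p' q) :=
  Relation.ReflTransGen.lift (fun r => PExpr.seq r q)
    (r := PStepAny) (fun _ _ hab => hab.elim (fun a ha => ⟨a, PStep.seql ha⟩)) _ _ h

lemma reach_parl {p p' q : PExpr Act} (h : PReach p p') :
    PReach (PExpr.par p q) (PExpr.par p' q) :=
  Relation.ReflTransGen.lift (fun r => PExpr.par r q)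
    (r := PStepAny) (fun _ _ hab => hab.elim (fun a ha => ⟨a, PStep.parl ha⟩)) _ _ h

lemma reach_parr {p q q' : PExpr Act} (h : PReach q q') :
    PReach (PExpr.par p q) (PExpr.par p q') :=
  Relation.ReflTransGen.lift (fun r => PExpr.par p r)
    (r := PStepAny) (fun _ _ hab => hab.elim (fun a ha => ⟨a, PStep.parr ha⟩)) _ _ h

lemma normed_of_term {p : PExpr Act} (h : PTerm p) : PNormed p := ⟨p, preach_refl p, h⟩

lemma normed_of_reach {p q : PExpr Act} (h : PReach p q) (hn : PNormed q) : PNormed p := by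
  obtain ⟨y, hy, hyt⟩ := hn
  exact ⟨y, preach_trans h hy, hyt⟩

lemma normed_star {t : PExpr Act} : PNormed (PExpr.star t) := normed_of_term PTerm.star

lemma normed_seq {p q : PExpr Act} (hp : PNormed p) (hq : PNormed q) :
    PNormed (PExpr.seq p q) := by
  obtain ⟨w, hw, hwt⟩ := hp
  obtain ⟨y, hy, hyt⟩ := hq
  rcases Relation.ReflTransGen.cases_head hy with rfl | ⟨z, ⟨a, hz⟩, hzy⟩
  · exact ⟨PExpr.seq w q, reach_seql hw, PTerm.seq hwt hyt⟩
  · refine ⟨y, preach_trans (reach_seql hw) ?_, hyt⟩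
    exact Relation.ReflTransGen.head ⟨a, PStep.seqr hwt hz⟩ hzy

lemma normed_par {p q : PExpr Act} (hp : PNormed p) (hq : PNormed q) :
    PNormed (PExpr.par p q) := by
  obtain ⟨w, hw, hwt⟩ := hp
  obtain ⟨y, hy, hyt⟩ := hq
  exact ⟨PExpr.par w y, preach_trans (reach_parl hw) (reach_parr hy), PTerm.par hwt hyt⟩

lemma normed_seq_left {p q : PExpr Act} (h : PNormed (PExpr.seq p q)) : PNormed p := by
  obtain ⟨y, hy, hyt⟩ := h
  have key : ∀ x, PReach x y → ∀ p q : PExpr Act, x = PExpr.seq p q → PNormed p := by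
    intro x hx
    induction hx using Relation.ReflTransGen.head_induction_on with
    | refl =>
      rintro p q rfl
      exact normed_of_term (term_seq_inv hyt).1
    | head h' htail ih =>
      rintro p q rfl
      obtain ⟨a, ha⟩ := h'
      rcases step_seq_inv ha with ⟨p', rfl, hstep⟩ | ⟨hterm, _⟩
      · exact normed_of_reach (preach_single hstep) (ih _ _ rfl)
      · exact normed_of_term hterm
  exact key _ hy p q rfl

lemma normed_seq_right {p q : PExpr Act} (h : PNormed (PExpr.seq p q)) : PNormed q := by
  obtain ⟨y, hy, hyt⟩ := h
  have key : ∀ x, PReach x y → ∀ p q : PExpr Act, x = PExpr.seq p q → PNormed q := by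
    intro x hx
    induction hx using Relation.ReflTransGen.head_induction_on with
    | refl =>
      rintro p q rfl
      exact normed_of_term (term_seq_inv hyt).2
    | head h' htail ih =>
      rintro p q rfl
      obtain ⟨a, ha⟩ := h'
      rcases step_seq_inv ha with ⟨p', rfl, hstep⟩ | ⟨hterm, hq⟩
      · exact ih _ _ rfl
      · exact normed_of_reach (preach_single hq) ⟨y, htail, hyt⟩
  exact key _ hy p q rfl


lemma reach_par {x y : PExpr Act} (h : PReach x y) :
    ∀ u v, x = PExpr.par u v → ∃ u' v', y = PExpr.par u' v' ∧ PReach u u' ∧ PReach v v' := by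
  induction h with
  | refl => exact fun u v hx => ⟨u, v, hx, preach_refl u, preach_refl v⟩
  | tail _ hstep ih =>
    rintro u v rfl
    obtain ⟨u', v', rfl, hu, hv⟩ := ih u v rfl
    obtain ⟨a, ha⟩ := hstep
    rcases step_par_inv ha with ⟨u'', rfl, hs⟩ | ⟨v'', rfl, hs⟩
    · exact ⟨u'', v', rfl, preach_trans hu (preach_single hs), hv⟩
    · exact ⟨u', v'', rfl, hu, preach_trans hv (preach_single hs)⟩

lemma normed_par_left {p q : PExpr Act} (h : PNormed (PExpr.par p q)) : PNormed p := by
  obtain ⟨y, hy, hyt⟩ := h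
  obtain ⟨u', v', rfl, hu, _⟩ := reach_par hy p q rfl
  exact ⟨u', hu, (term_par_inv hyt).1⟩

lemma normed_par_right {p q : PExpr Act} (h : PNormed (PExpr.par p q)) : PNormed q := by
  obtain ⟨y, hy, hyt⟩ := h
  obtain ⟨u', v', rfl, _, hv⟩ := reach_par hy p q rfl
  exact ⟨v', hv, (term_par_inv hyt).2⟩

lemma reach_seq_star {x y : PExpr Act} (h : PReach x y) :
    ∀ r t, x = PExpr.seq r (PExpr.star t) → ∃ r', y = PExpr.seq r' (PExpr.star t) := by
  induction h with
  | refl => exact fun r t hx => ⟨r, hx⟩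
  | tail _ hstep ih =>
    rintro r t rfl
    obtain ⟨r', rfl⟩ := ih r t rfl
    obtain ⟨a, ha⟩ := hstep
    rcases step_seq_inv ha with ⟨r'', rfl, _⟩ | ⟨_, hq⟩
    · exact ⟨r'', rfl⟩
    · obtain ⟨t', rfl, _⟩ := step_star_inv hq
      exact ⟨t', rfl⟩

lemma oc_step {p : PExpr Act} {a : Act} {x : PExpr Act} (h : PStep p a x) : OC x ≤ OC p := by
  induction h with
  | act => simp [OC]
  | @altl p q p' a _ ih =>
    calc OC p' ≤ OC p := ih
    _ ≤ max (OC p) (OC q) + 1 := le_trans (le_max_left _ _) (Nat.le_succ _)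
    _ = OC (PExpr.alt p q) := rfl
  | @altr p q q' a _ ih =>
    calc OC q' ≤ OC q := ih
    _ ≤ max (OC p) (OC q) + 1 := le_trans (le_max_right _ _) (Nat.le_succ _)
    _ = OC (PExpr.alt p q) := rfl
  | @seql p q p' a _ _ => simp [OC]
  | @seqr p q q' a _ hq ih =>
    by_cases hs : isStarP q
    · cases q with
      | star t =>
        obtain ⟨t', rfl, _⟩ := step_star_inv hq
        simp [OC, isStarP]
      | dl => simp [isStarP] at hs
      | emp => simp [isStarP] at hs
      | act _ => simp [isStarP] at hs
      | seq _ _ => simp [isStarP] at hs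
      | alt _ _ => simp [isStarP] at hs
      | par _ _ => simp [isStarP] at hs
    · simp only [OC, if_neg hs]
      exact le_trans ih (Nat.le_succ _)
  | star _ => simp [OC, isStarP]
  | parl _ _ => simp [OC]
  | parr _ _ => simp [OC]

lemma oc_reach {p q : PExpr Act} (h : PReach p q) : OC q ≤ OC p := by
  induction h with
  | refl => exact le_refl _
  | tail _ hstep ih => obtain ⟨a, ha⟩ := hstep; exact le_trans (oc_step ha) ih

lemma reach_seq_nonstar {x y : PExpr Act} (h : PReach x y) :
    ∀ p q, x = PExpr.seq p q → isStarP q = false → OC x ≤ OC y →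
      ∃ r, y = PExpr.seq r q ∧ PReach p r := by
  induction h with
  | refl => exact fun p q hx _ _ => ⟨p, hx, preach_refl p⟩
  | @tail b c hreach hstep ih =>
    rintro p q rfl hq hoc
    obtain ⟨a, ha⟩ := hstep
    have hocb : OC (PExpr.seq p q) ≤ OC b := le_trans hoc (oc_step ha)
    obtain ⟨r, rfl, hpr⟩ := ih p q rfl hq hocb
    rcases step_seq_inv ha with ⟨r', rfl, hs⟩ | ⟨_, hqs⟩
    · exact ⟨r', rfl, preach_trans hpr (preach_single hs)⟩
    · exfalso
      have h1 : OC c ≤ OC q := oc_step hqs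
      have h2 : OC (PExpr.seq p q) = OC q + 1 := by simp [OC, hq]
      omega

/-- The SCC of an expression. -/
def sccOf (p : PExpr Act) : Set (PExpr Act) := {x | PReach p x ∧ PReach x p}

lemma mem_sccOf_self (p : PExpr Act) : p ∈ sccOf p := ⟨preach_refl p, preach_refl p⟩

lemma isSCC_sccOf (p : PExpr Act) : IsSCC (sccOf p) := by
  constructor
  · rintro s ⟨_, hsp⟩ t ⟨hpt, _⟩
    exact preach_trans hsp hpt
  · intro D hsub hmut
    apply Set.Subset.antisymm
    · intro d hd
      exact ⟨hmut p (hsub (mem_sccOf_self p)) d hd, hmut d hd p (hsub (mem_sccOf_self p))⟩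
    · exact hsub

lemma sameSCC_of_mutual {x y : PExpr Act} (h1 : PReach x y) (h2 : PReach y x) :
    SameSCC x y :=
  ⟨sccOf x, isSCC_sccOf x, mem_sccOf_self x, h1, h2⟩

lemma sameSCC_refl (x : PExpr Act) : SameSCC x x :=
  sameSCC_of_mutual (preach_refl x) (preach_refl x)

lemma sameSCC_mutual {x y : PExpr Act} (h : SameSCC x y) : PReach x y ∧ PReach y x := by
  obtain ⟨D, hD, hx, hy⟩ := h
  exact ⟨hD.1 x hx y hy, hD.1 y hy x hx⟩

lemma scc_mem_of_mutual {C : Set (PExpr Act)} (hC : IsSCC C) {c₁ c₂ z : PExpr Act}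
    (h₁ : c₁ ∈ C) (h₂ : c₂ ∈ C) (hr : PReach c₁ z) (hr' : PReach z c₂) : z ∈ C := by
  have : insert z C = C := by
    apply hC.2
    · exact Set.subset_insert _ _
    · intro s hs t ht
      rcases hs with rfl | hs
      · rcases ht with rfl | ht
        · exact preach_refl _
        · exact preach_trans hr' (hC.1 c₂ h₂ t ht)
      · rcases ht with rfl | ht
        · exact preach_trans (hC.1 s hs c₁ h₁) hr
        · exact hC.1 s hs t ht
  rw [← this]; exact Set.mem_insert _ _

lemma scc_path_stays {C : Set (PExpr Act)} (hC : IsSCC C) {x y z : PExpr Act}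
    (hx : x ∈ C) (hy : y ∈ C) (h1 : PReach x z) (h2 : PReach z y) : z ∈ C :=
  scc_mem_of_mutual hC hx hy h1 h2

lemma alive_normed {C : Set (PExpr Act)} {s : PExpr Act} (h : AliveExit C s) : PNormed s := by
  rcases h.2 with ht | ⟨e, hstep, _, hn⟩
  · exact normed_of_term ht
  · exact normed_of_reach (preach_single hstep) hn

/-- A simple size measure. -/
def sizeP : PExpr Act → ℕ
  | PExpr.dl => 1
  | PExpr.emp => 1
  | PExpr.act _ => 1
  | PExpr.seq p q => sizeP p + sizeP q + 1
  | PExpr.alt p q => sizeP p + sizeP q + 1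
  | PExpr.star p => sizeP p + 1
  | PExpr.par p q => sizeP p + sizeP q + 1

/-- The goal: a maximal alive exit state which moreover terminates if anything in `C` does. -/
def MaxGoal (C : Set (PExpr Act)) : Prop :=
  ∃ s, AliveExit C s ∧ (∀ t ∈ C, PTerm t → PTerm s) ∧
    ∀ s', AliveExit C s' → ∀ e' ∈ ExtN C s', ∃ e ∈ ExtN C s, ExitEquiv e e'



lemma seq_case {n : ℕ}
    (IH : ∀ m, m < n → ∀ C : Set (PExpr Act), IsSCC C → (∃ x ∈ C, sizeP x ≤ m) →
      (∃ s, AliveExit C s) → MaxGoal C)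
    {C : Set (PExpr Act)} (hC : IsSCC C) (ha : ∃ s, AliveExit C s)
    {q₀ p : PExpr Act} (hp : PExpr.seq p q₀ ∈ C) (hsize : sizeP p < n)
    (hsh : ∀ c ∈ C, ∃ r, c = PExpr.seq r q₀)
    (hres : ∀ r, PExpr.seq r q₀ ∈ C → PTerm r → ∀ a z, PStep q₀ a z → z ∉ C)
    (hqn : PNormed q₀) : MaxGoal C := by
  classical
  set C₀ : Set (PExpr Act) := {r | PExpr.seq r q₀ ∈ C} with hC₀def
  have hpC₀ : p ∈ C₀ := hp
  -- projection of paths inside C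
  have hproj : ∀ x y, PReach x y → x ∈ C → y ∈ C →
      ∀ r r', x = PExpr.seq r q₀ → y = PExpr.seq r' q₀ → PReach r r' := by
    intro x y h
    induction h with
    | refl =>
      rintro hx _ r r' rfl heq
      injection heq with h1 _
      subst h1; exact preach_refl r
    | @tail b c hreach hstep ih =>
      rintro hx hc r r' rfl rfl
      have hb : b ∈ C := by
        obtain ⟨a, ha'⟩ := hstep
        exact scc_path_stays hC hx hc hreach (preach_single ha')
      obtain ⟨rb, rfl⟩ := hsh b hb
      have hrb : PReach r rb := ih hx hb r rb rfl rfl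
      obtain ⟨a, ha'⟩ := hstep
      rcases step_seq_inv ha' with ⟨r'', heq, hs⟩ | ⟨hterm, hqs⟩
      · injection heq with h1 _
        subst h1
        exact preach_trans hrb (preach_single hs)
      · exact absurd hc (hres rb hb hterm a _ hqs)
  -- C₀ is an SCC
  have hC₀eq : C₀ = sccOf p := by
    apply Set.Subset.antisymm
    · intro r hr
      have h1 : PReach (PExpr.seq p q₀) (PExpr.seq r q₀) := hC.1 _ hp _ hr
      have h2 : PReach (PExpr.seq r q₀) (PExpr.seq p q₀) := hC.1 _ hr _ hp
      exact ⟨hproj _ _ h1 hp hr p r rfl rfl, hproj _ _ h2 hr hp r p rfl rfl⟩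
    · rintro y ⟨h1, h2⟩
      exact scc_mem_of_mutual hC hp hp (reach_seql h1) (reach_seql h2)
  have hC₀scc : IsSCC C₀ := by rw [hC₀eq]; exact isSCC_sccOf p
  -- characterization of exit transitions
  have hexit : ∀ r, r ∈ C₀ → ∀ a z, PStep (PExpr.seq r q₀) a z → z ∉ C → PNormed z →
      (∃ u, z = PExpr.seq u q₀ ∧ (a, u) ∈ ExtN C₀ r) ∨ (PTerm r ∧ PStep q₀ a z) := by
    intro r hr a z hstep hnot hn
    rcases step_seq_inv hstep with ⟨u, rfl, hs⟩ | ⟨hterm, hqs⟩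
    · refine Or.inl ⟨u, rfl, hs, fun hu => hnot hu, normed_seq_left hn⟩
    · exact Or.inr ⟨hterm, hqs⟩
  -- lifting exits of C₀ to exits of C
  have hmk : ∀ r, r ∈ C₀ → ∀ a u, (a, u) ∈ ExtN C₀ r →
      (a, PExpr.seq u q₀) ∈ ExtN C (PExpr.seq r q₀) := by
    rintro r hr a u ⟨hs, hnot, hn⟩
    exact ⟨PStep.seql hs, fun hmem => hnot hmem, normed_seq hn hqn⟩
  -- aliveness transfer
  have halive : ∀ s', AliveExit C s' → ∃ r, s' = PExpr.seq r q₀ ∧ AliveExit C₀ r := by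
    rintro s' ⟨hmem, hcase⟩
    obtain ⟨r, rfl⟩ := hsh s' hmem
    refine ⟨r, rfl, hmem, ?_⟩
    rcases hcase with hterm | ⟨⟨a, z⟩, hstep, hnot, hn⟩
    · exact Or.inl (term_seq_inv hterm).1
    · rcases hexit r hmem a z hstep hnot hn with ⟨u, rfl, hu⟩ | ⟨hterm, _⟩
      · exact Or.inr ⟨(a, u), hu⟩
      · exact Or.inl hterm
  obtain ⟨s₀, hs₀⟩ := ha
  obtain ⟨r₀, rfl, hr₀⟩ := halive s₀ hs₀
  obtain ⟨rh, hrha, hrhterm, hrhcov⟩ :=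
    IH (sizeP p) hsize C₀ hC₀scc ⟨p, hpC₀, le_refl _⟩ ⟨r₀, hr₀⟩
  have hrhC : PExpr.seq rh q₀ ∈ C := hrha.1
  refine ⟨PExpr.seq rh q₀, ⟨hrhC, ?_⟩, ?_, ?_⟩
  · -- aliveness of the candidate
    rcases hrha.2 with hterm | ⟨⟨a, u⟩, hu⟩
    · obtain ⟨y, hy, hyt⟩ := hqn
      rcases Relation.ReflTransGen.cases_head hy with rfl | ⟨q₁, ⟨a, hstep⟩, hq₁y⟩
      · exact Or.inl (PTerm.seq hterm hyt)
      · exact Or.inr ⟨(a, q₁), PStep.seqr hterm hstep,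
          hres rh hrhC hterm a q₁ hstep, ⟨y, hq₁y, hyt⟩⟩
    · exact Or.inr ⟨(a, PExpr.seq u q₀), hmk rh hrha.1 a u hu⟩
  · -- termination maximality
    intro t ht htt
    obtain ⟨rt, rfl⟩ := hsh t ht
    obtain ⟨h1, h2⟩ := term_seq_inv htt
    exact PTerm.seq (hrhterm rt ht h1) h2
  · -- coverage
    rintro s' hs' ⟨a, z⟩ ⟨hstep, hnot, hn⟩
    obtain ⟨r, rfl, hralive⟩ := halive s' hs'
    rcases hexit r hralive.1 a z hstep hnot hn with ⟨u, rfl, hu⟩ | ⟨hterm, hqs⟩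
    · obtain ⟨⟨a', u'⟩, hu', heq, hsame⟩ := hrhcov r hralive (a, u) hu
      refine ⟨(a', PExpr.seq u' q₀), hmk rh hrha.1 a' u' hu', heq, ?_⟩
      obtain ⟨m1, m2⟩ := sameSCC_mutual hsame
      exact sameSCC_of_mutual (reach_seql m1) (reach_seql m2)
    · have hrhT : PTerm rh := hrhterm r hralive.1 hterm
      exact ⟨(a, z), ⟨PStep.seqr hrhT hqs, hnot, hn⟩, rfl, sameSCC_refl z⟩



lemma par_case {n : ℕ}
    (IH : ∀ m, m < n → ∀ C : Set (PExpr Act), IsSCC C → (∃ x ∈ C, sizeP x ≤ m) →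
      (∃ s, AliveExit C s) → MaxGoal C)
    {C : Set (PExpr Act)} (hC : IsSCC C) (ha : ∃ s, AliveExit C s)
    {p q : PExpr Act} (hx : PExpr.par p q ∈ C)
    (hsizep : sizeP p < n) (hsizeq : sizeP q < n) : MaxGoal C := by
  classical
  set C₁ : Set (PExpr Act) := sccOf p with hC₁def
  set C₂ : Set (PExpr Act) := sccOf q with hC₂def
  have hC₁scc : IsSCC C₁ := isSCC_sccOf p
  have hC₂scc : IsSCC C₂ := isSCC_sccOf q
  have memC : ∀ u ∈ C₁, ∀ v ∈ C₂, PExpr.par u v ∈ C := by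
    rintro u ⟨hpu, hup⟩ v ⟨hqv, hvq⟩
    refine scc_mem_of_mutual hC hx hx ?_ ?_
    · exact preach_trans (reach_parl hpu) (reach_parr hqv)
    · exact preach_trans (reach_parl hup) (reach_parr hvq)
  have hsh : ∀ c ∈ C, ∃ u v, c = PExpr.par u v ∧ u ∈ C₁ ∧ v ∈ C₂ := by
    intro c hc
    have h1 : PReach (PExpr.par p q) c := hC.1 _ hx _ hc
    obtain ⟨u, v, rfl, hpu, hqv⟩ := reach_par h1 p q rfl
    have h2 : PReach (PExpr.par u v) (PExpr.par p q) := hC.1 _ hc _ hx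
    obtain ⟨u', v', heq, hu, hv⟩ := reach_par h2 u v rfl
    injection heq with e1 e2
    subst e1; subst e2
    exact ⟨u, v, rfl, ⟨hpu, hu⟩, ⟨hqv, hv⟩⟩
  have notCl : ∀ u' v, u' ∉ C₁ → v ∈ C₂ → PExpr.par u' v ∉ C := by
    intro u' v hu' _ hmem
    obtain ⟨u'', v'', heq, hu'', _⟩ := hsh _ hmem
    injection heq with e1 e2
    subst e1; exact hu' hu''
  have notCr : ∀ u v', u ∈ C₁ → v' ∉ C₂ → PExpr.par u v' ∉ C := by
    intro u v' _ hv' hmem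
    obtain ⟨u'', v'', heq, _, hv''⟩ := hsh _ hmem
    injection heq with e1 e2
    subst e2; exact hv' hv''
  have hexit : ∀ u, u ∈ C₁ → ∀ v, v ∈ C₂ → ∀ a z, PStep (PExpr.par u v) a z → z ∉ C →
      PNormed z →
      (∃ u', z = PExpr.par u' v ∧ (a, u') ∈ ExtN C₁ u ∧ PNormed v) ∨
      (∃ v', z = PExpr.par u v' ∧ (a, v') ∈ ExtN C₂ v ∧ PNormed u) := by
    intro u hu v hv a z hstep hnot hn
    rcases step_par_inv hstep with ⟨u', rfl, hs⟩ | ⟨v', rfl, hs⟩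
    · have hu' : u' ∉ C₁ := fun hmem => hnot (memC u' hmem v hv)
      exact Or.inl ⟨u', rfl, ⟨hs, hu', normed_par_left hn⟩, normed_par_right hn⟩
    · have hv' : v' ∉ C₂ := fun hmem => hnot (memC u hu v' hmem)
      exact Or.inr ⟨v', rfl, ⟨hs, hv', normed_par_right hn⟩, normed_par_left hn⟩
  by_cases h1 : ∃ u, AliveExit C₁ u
  · by_cases h2 : ∃ v, AliveExit C₂ v
    · -- both components have alive exit states
      obtain ⟨uh, huha, huhterm, huhcov⟩ :=
        IH (sizeP p) hsizep C₁ hC₁scc ⟨p, mem_sccOf_self p, le_refl _⟩ h1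
      obtain ⟨vh, hvha, hvhterm, hvhcov⟩ :=
        IH (sizeP q) hsizeq C₂ hC₂scc ⟨q, mem_sccOf_self q, le_refl _⟩ h2
      have hun : PNormed uh := alive_normed huha
      have hvn : PNormed vh := alive_normed hvha
      have hsC : PExpr.par uh vh ∈ C := memC uh huha.1 vh hvha.1
      refine ⟨PExpr.par uh vh, ⟨hsC, ?_⟩, ?_, ?_⟩
      · rcases huha.2 with hut | ⟨⟨b, u'⟩, hstep, hnot, hn⟩
        · rcases hvha.2 with hvt | ⟨⟨b, v'⟩, hstep, hnot, hn⟩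
          · exact Or.inl (PTerm.par hut hvt)
          · exact Or.inr ⟨(b, PExpr.par uh v'), PStep.parr hstep,
              notCr uh v' huha.1 hnot, normed_par hun hn⟩
        · exact Or.inr ⟨(b, PExpr.par u' vh), PStep.parl hstep,
            notCl u' vh hnot hvha.1, normed_par hn hvn⟩
      · intro t ht htt
        obtain ⟨u, v, rfl, hu, hv⟩ := hsh t ht
        obtain ⟨htu, htv⟩ := term_par_inv htt
        exact PTerm.par (huhterm u hu htu) (hvhterm v hv htv)
      · rintro s' hs' ⟨a, z⟩ ⟨hstep, hnot, hn⟩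
        obtain ⟨u, v, rfl, hu, hv⟩ := hsh s' hs'.1
        rcases hexit u hu v hv a z hstep hnot hn with
          ⟨u', rfl, hu'mem, hvnorm⟩ | ⟨v', rfl, hv'mem, hunorm⟩
        · obtain ⟨⟨a', u''⟩, hu''mem, heq, hsame⟩ :=
            huhcov u ⟨hu, Or.inr ⟨(a, u'), hu'mem⟩⟩ (a, u') hu'mem
          refine ⟨(a', PExpr.par u'' vh),
            ⟨PStep.parl hu''mem.1, notCl u'' vh hu''mem.2.1 hvha.1,
              normed_par hu''mem.2.2 hvn⟩, heq, ?_⟩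
          obtain ⟨m1, m2⟩ := sameSCC_mutual hsame
          have hv1 : PReach vh v := hC₂scc.1 _ hvha.1 _ hv
          have hv2 : PReach v vh := hC₂scc.1 _ hv _ hvha.1
          exact sameSCC_of_mutual
            (preach_trans (reach_parl m1) (reach_parr hv1))
            (preach_trans (reach_parl m2) (reach_parr hv2))
        · obtain ⟨⟨a', v''⟩, hv''mem, heq, hsame⟩ :=
            hvhcov v ⟨hv, Or.inr ⟨(a, v'), hv'mem⟩⟩ (a, v') hv'mem
          refine ⟨(a', PExpr.par uh v''),
            ⟨PStep.parr hv''mem.1, notCr uh v'' huha.1 hv''mem.2.1,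
              normed_par hun hv''mem.2.2⟩, heq, ?_⟩
          obtain ⟨m1, m2⟩ := sameSCC_mutual hsame
          have hu1 : PReach uh u := hC₁scc.1 _ huha.1 _ hu
          have hu2 : PReach u uh := hC₁scc.1 _ hu _ huha.1
          exact sameSCC_of_mutual
            (preach_trans (reach_parl hu1) (reach_parr m1))
            (preach_trans (reach_parl hu2) (reach_parr m2))
    · -- only the left component has alive exit states
      obtain ⟨s₀, hs₀⟩ := ha
      obtain ⟨u₀, v₀, rfl, hu₀, hv₀⟩ := hsh s₀ hs₀.1
      have hforce : ∀ u v, u ∈ C₁ → v ∈ C₂ → AliveExit C (PExpr.par u v) →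
          ∃ b u', (b, u') ∈ ExtN C₁ u ∧ PNormed v := by
        rintro u v hu hv ⟨_, hcase⟩
        rcases hcase with hterm | ⟨⟨b, z⟩, hstep, hnot, hn⟩
        · exact absurd ⟨v, hv, Or.inl (term_par_inv hterm).2⟩ h2
        · rcases hexit u hu v hv b z hstep hnot hn with
            ⟨u', rfl, hmem, hvnorm⟩ | ⟨v', rfl, hmem, _⟩
          · exact ⟨b, u', hmem, hvnorm⟩
          · exact absurd ⟨v, hv, Or.inr ⟨(b, v'), hmem⟩⟩ h2
      obtain ⟨b₀, u₀', hmem₀, hv₀n⟩ := hforce u₀ v₀ hu₀ hv₀ hs₀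
      obtain ⟨uh, huha, huhterm, huhcov⟩ :=
        IH (sizeP p) hsizep C₁ hC₁scc ⟨p, mem_sccOf_self p, le_refl _⟩ h1
      have hsC : PExpr.par uh v₀ ∈ C := memC uh huha.1 v₀ hv₀
      refine ⟨PExpr.par uh v₀, ⟨hsC, ?_⟩, ?_, ?_⟩
      · obtain ⟨⟨b', u''⟩, hu''mem, _, _⟩ :=
          huhcov u₀ ⟨hu₀, Or.inr ⟨(b₀, u₀'), hmem₀⟩⟩ (b₀, u₀') hmem₀
        exact Or.inr ⟨(b', PExpr.par u'' v₀), PStep.parl hu''mem.1,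
          notCl u'' v₀ hu''mem.2.1 hv₀, normed_par hu''mem.2.2 hv₀n⟩
      · intro t ht htt
        obtain ⟨u, v, rfl, hu, hv⟩ := hsh t ht
        exact absurd ⟨v, hv, Or.inl (term_par_inv htt).2⟩ h2
      · rintro s' hs' ⟨a, z⟩ ⟨hstep, hnot, hn⟩
        obtain ⟨u, v, rfl, hu, hv⟩ := hsh s' hs'.1
        rcases hexit u hu v hv a z hstep hnot hn with
          ⟨u', rfl, hu'mem, hvnorm⟩ | ⟨v', rfl, hv'mem, _⟩
        · obtain ⟨⟨a', u''⟩, hu''mem, heq, hsame⟩ :=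
            huhcov u ⟨hu, Or.inr ⟨(a, u'), hu'mem⟩⟩ (a, u') hu'mem
          refine ⟨(a', PExpr.par u'' v₀),
            ⟨PStep.parl hu''mem.1, notCl u'' v₀ hu''mem.2.1 hv₀,
              normed_par hu''mem.2.2 hv₀n⟩, heq, ?_⟩
          obtain ⟨m1, m2⟩ := sameSCC_mutual hsame
          have hv1 : PReach v₀ v := hC₂scc.1 _ hv₀ _ hv
          have hv2 : PReach v v₀ := hC₂scc.1 _ hv _ hv₀
          exact sameSCC_of_mutual
            (preach_trans (reach_parl m1) (reach_parr hv1))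
            (preach_trans (reach_parl m2) (reach_parr hv2))
        · exact absurd ⟨v, hv, Or.inr ⟨(a, v'), hv'mem⟩⟩ h2
  · -- the left component has no alive exit state
    by_cases h2 : ∃ v, AliveExit C₂ v
    · obtain ⟨s₀, hs₀⟩ := ha
      obtain ⟨u₀, v₀, rfl, hu₀, hv₀⟩ := hsh s₀ hs₀.1
      have hforce : ∀ u v, u ∈ C₁ → v ∈ C₂ → AliveExit C (PExpr.par u v) →
          ∃ b v', (b, v') ∈ ExtN C₂ v ∧ PNormed u := by
        rintro u v hu hv ⟨_, hcase⟩
        rcases hcase with hterm | ⟨⟨b, z⟩, hstep, hnot, hn⟩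
        · exact absurd ⟨u, hu, Or.inl (term_par_inv hterm).1⟩ h1
        · rcases hexit u hu v hv b z hstep hnot hn with
            ⟨u', rfl, hmem, _⟩ | ⟨v', rfl, hmem, hunorm⟩
          · exact absurd ⟨u, hu, Or.inr ⟨(b, u'), hmem⟩⟩ h1
          · exact ⟨b, v', hmem, hunorm⟩
      obtain ⟨b₀, v₀', hmem₀, hu₀n⟩ := hforce u₀ v₀ hu₀ hv₀ hs₀
      obtain ⟨vh, hvha, hvhterm, hvhcov⟩ :=
        IH (sizeP q) hsizeq C₂ hC₂scc ⟨q, mem_sccOf_self q, le_refl _⟩ h2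
      have hsC : PExpr.par u₀ vh ∈ C := memC u₀ hu₀ vh hvha.1
      refine ⟨PExpr.par u₀ vh, ⟨hsC, ?_⟩, ?_, ?_⟩
      · obtain ⟨⟨b', v''⟩, hv''mem, _, _⟩ :=
          hvhcov v₀ ⟨hv₀, Or.inr ⟨(b₀, v₀'), hmem₀⟩⟩ (b₀, v₀') hmem₀
        exact Or.inr ⟨(b', PExpr.par u₀ v''), PStep.parr hv''mem.1,
          notCr u₀ v'' hu₀ hv''mem.2.1, normed_par hu₀n hv''mem.2.2⟩
      · intro t ht htt
        obtain ⟨u, v, rfl, hu, hv⟩ := hsh t ht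
        exact absurd ⟨u, hu, Or.inl (term_par_inv htt).1⟩ h1
      · rintro s' hs' ⟨a, z⟩ ⟨hstep, hnot, hn⟩
        obtain ⟨u, v, rfl, hu, hv⟩ := hsh s' hs'.1
        rcases hexit u hu v hv a z hstep hnot hn with
          ⟨u', rfl, hu'mem, _⟩ | ⟨v', rfl, hv'mem, hunorm⟩
        · exact absurd ⟨u, hu, Or.inr ⟨(a, u'), hu'mem⟩⟩ h1
        · obtain ⟨⟨a', v''⟩, hv''mem, heq, hsame⟩ :=
            hvhcov v ⟨hv, Or.inr ⟨(a, v'), hv'mem⟩⟩ (a, v') hv'mem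
          refine ⟨(a', PExpr.par u₀ v''),
            ⟨PStep.parr hv''mem.1, notCr u₀ v'' hu₀ hv''mem.2.1,
              normed_par hu₀n hv''mem.2.2⟩, heq, ?_⟩
          obtain ⟨m1, m2⟩ := sameSCC_mutual hsame
          have hu1 : PReach u₀ u := hC₁scc.1 _ hu₀ _ hu
          have hu2 : PReach u u₀ := hC₁scc.1 _ hu _ hu₀
          exact sameSCC_of_mutual
            (preach_trans (reach_parl hu1) (reach_parr m1))
            (preach_trans (reach_parl hu2) (reach_parr m2))
    · -- neither component has an alive exit state: contradiction
      exfalso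
      obtain ⟨s₀, hs₀⟩ := ha
      obtain ⟨u₀, v₀, rfl, hu₀, hv₀⟩ := hsh s₀ hs₀.1
      rcases hs₀.2 with hterm | ⟨⟨b, z⟩, hstep, hnot, hn⟩
      · exact h1 ⟨u₀, hu₀, Or.inl (term_par_inv hterm).1⟩
      · rcases hexit u₀ hu₀ v₀ hv₀ b z hstep hnot hn with
          ⟨u', rfl, hmem, _⟩ | ⟨v', rfl, hmem, _⟩
        · exact h1 ⟨u₀, hu₀, Or.inr ⟨(b, u'), hmem⟩⟩
        · exact h2 ⟨v₀, hv₀, Or.inr ⟨(b, v'), hmem⟩⟩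



lemma sizeP_pos (p : PExpr Act) : 1 ≤ sizeP p := by
  cases p <;> simp [sizeP]

lemma maxGoal_aux : ∀ n : ℕ, ∀ C : Set (PExpr Act), IsSCC C → (∃ x ∈ C, sizeP x ≤ n) →
    (∃ s, AliveExit C s) → MaxGoal C := by
  intro n
  induction n using Nat.strong_induction_on with
  | _ n IH =>
  intro C hC hsize ha
  obtain ⟨x, hxC, hxs⟩ := hsize
  by_cases hsing : ∀ y ∈ C, y = x
  · -- singleton SCC
    obtain ⟨s₀, hs₀⟩ := ha
    refine ⟨s₀, hs₀, ?_, ?_⟩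
    · intro t ht htt
      have h1 := hsing t ht
      have h2 := hsing s₀ hs₀.1
      rw [h2, ← h1]
      exact htt
    · intro s' hs' e' he'
      have : s' = s₀ := by rw [hsing s' hs'.1, ← hsing s₀ hs₀.1]
      subst this
      exact ⟨e', he', rfl, sameSCC_refl e'.2⟩
  · push_neg at hsing
    obtain ⟨y, hyC, hyx⟩ := hsing
    -- x is the target of a transition, so it is emp, seq or par
    have hin : PReach y x := hC.1 y hyC x hxC
    rcases Relation.ReflTransGen.cases_tail hin with heq | ⟨c, _, a, hstep⟩
    · exact absurd heq.symm hyx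
    have hshapex := step_shape hstep
    -- x also has an outgoing transition
    have hout : PReach x y := hC.1 x hxC y hyC
    obtain ⟨z₀, ⟨a₀, hz₀⟩, _⟩ : ∃ z, PStepAny x z ∧ PReach z y := by
      rcases Relation.ReflTransGen.cases_head hout with rfl | h
      · exact absurd rfl hyx
      · exact h
    rcases hshapex with rfl | ⟨u, v, rfl⟩ | ⟨u, v, rfl⟩
    · exact absurd hz₀ not_step_emp
    · -- sequential composition
      have hnon : isStarP v = false → MaxGoal C := by
        intro hv
        have hOC : ∀ c ∈ C, OC c = OC (PExpr.seq u v) := by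
          intro c hc
          exact le_antisymm (oc_reach (hC.1 _ hxC _ hc)) (oc_reach (hC.1 _ hc _ hxC))
        have hsh : ∀ c ∈ C, ∃ r, c = PExpr.seq r v := by
          intro c hc
          obtain ⟨r, rfl, _⟩ := reach_seq_nonstar (hC.1 _ hxC _ hc) u v rfl hv
            (le_of_eq (hOC c hc).symm)
          exact ⟨r, rfl⟩
        have hres : ∀ r, PExpr.seq r v ∈ C → PTerm r → ∀ a z, PStep v a z → z ∉ C := by
          intro r hr hterm b z hz hmem
          have h1 : OC z ≤ OC v := oc_step hz
          have h2 : OC z = OC (PExpr.seq u v) := hOC z hmem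
          have h3 : OC (PExpr.seq u v) = OC v + 1 := by simp [OC, hv]
          omega
        have hqn : PNormed v := by
          obtain ⟨s₀, hs₀⟩ := ha
          obtain ⟨r, rfl⟩ := hsh s₀ hs₀.1
          rcases hs₀.2 with hterm | ⟨⟨b, z⟩, hstep', _, hn⟩
          · exact normed_of_term (term_seq_inv hterm).2
          · rcases step_seq_inv hstep' with ⟨u', rfl, _⟩ | ⟨_, hqs⟩
            · exact normed_seq_right hn
            · exact normed_of_reach (preach_single hqs) hn
        have hsz : sizeP u < n := by
          have := sizeP_pos v
          simp [sizeP] at hxs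
          omega
        exact seq_case IH hC ha hxC hsz hsh hres hqn
      cases v with
      | star t =>
        -- basic SCC over `t*`
        have hsh : ∀ c ∈ C, ∃ r, c = PExpr.seq r (PExpr.star t) := by
          intro c hc
          exact reach_seq_star (hC.1 _ hxC _ hc) u t rfl
        by_cases hA : ∃ r, PExpr.seq r (PExpr.star t) ∈ C ∧ PTerm r ∧
            ∃ a t', PStep t a t' ∧ PExpr.seq t' (PExpr.star t) ∈ C
        · -- a restart edge inside the SCC: no normed exit transitions at all
          obtain ⟨r₀, hr₀C, hr₀T, a₀', t₀, ht₀, ht₀C⟩ := hA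
          refine ⟨PExpr.seq r₀ (PExpr.star t), ⟨hr₀C, Or.inl (PTerm.seq hr₀T PTerm.star)⟩,
            fun _ _ _ => PTerm.seq hr₀T PTerm.star, ?_⟩
          rintro s' hs' ⟨b, z⟩ ⟨hstep', hnot, hn⟩
          exfalso
          obtain ⟨r, rfl⟩ := hsh s' hs'.1
          have hzsh : ∃ w, z = PExpr.seq w (PExpr.star t) := by
            rcases step_seq_inv hstep' with ⟨w, rfl, _⟩ | ⟨_, hqs⟩
            · exact ⟨w, rfl⟩
            · obtain ⟨t', rfl, _⟩ := step_star_inv hqs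
              exact ⟨t', rfl⟩
          obtain ⟨w, rfl⟩ := hzsh
          obtain ⟨yy, hyy, hyyt⟩ := hn
          obtain ⟨w', rfl⟩ := reach_seq_star hyy w t rfl
          have hw'T : PTerm w' := (term_seq_inv hyyt).1
          have hback : PReach (PExpr.seq w (PExpr.star t)) (PExpr.seq t₀ (PExpr.star t)) :=
            preach_trans hyy (preach_single (PStep.seqr hw'T (PStep.star ht₀)))
          exact hnot (scc_mem_of_mutual hC hs'.1 ht₀C (preach_single hstep') hback)
        · -- no internal restart edge: reduce to the SCC of the left parts
          push_neg at hA
          have hres : ∀ r, PExpr.seq r (PExpr.star t) ∈ C → PTerm r →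
              ∀ a z, PStep (PExpr.star t) a z → z ∉ C := by
            intro r hr hterm b z hz hmem
            obtain ⟨t', rfl, ht'⟩ := step_star_inv hz
            exact hA r hr hterm b t' ht' hmem
          have hsz : sizeP u < n := by
            simp [sizeP] at hxs
            omega
          exact seq_case IH hC ha hxC hsz hsh hres normed_star
      | dl => exact hnon rfl
      | emp => exact hnon rfl
      | act b => exact hnon rfl
      | seq _ _ => exact hnon rfl
      | alt _ _ => exact hnon rfl
      | par _ _ => exact hnon rfl
    · -- parallel composition
      have h1 := sizeP_pos u
      have h2 := sizeP_pos v
      simp [sizeP] at hxs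
      exact par_case IH hC ha hxC (by omega) (by omega)


/-- Every SCC in PA*01 that has an alive exit state has a maximal
alive exit state: an alive exit state `s` such that for every alive exit state
`s'` and every `e' ∈ Extⁿ(s')` there is `e ∈ Extⁿ(s)` with `e ∼ e'`. -/
theorem maximal_alive_exit {Act : Type} [Nonempty Act] {C : Set (PExpr Act)}
    (hC : IsSCC C) (ha : ∃ s, AliveExit C s) :
    ∃ s, AliveExit C s ∧
      ∀ s', AliveExit C s' → ∀ e' ∈ ExtN C s', ∃ e ∈ ExtN C s, ExitEquiv e e' := by
  obtain ⟨s₀, hs₀⟩ := ha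
  obtain ⟨s, h1, _, h3⟩ :=
    maxGoal_aux (sizeP s₀) C hC ⟨s₀, hs₀.1, le_refl _⟩ ⟨s₀, hs₀⟩
  exact ⟨s, h1, h3⟩
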